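/- Let κ ∈ ℝ_{>0}^{6n} and a ∈ ℝ_{>0}^{3+3n}. Then a is a positive steady state of the mass-action system ẋ = S diag(κ) Φ(x), i.e., S diag(κ) Φ(a) = 0, if and only if there exists λ ∈ ℝ_{>0}^{3n} such that κ_j = (Eλ)_j / Φ(a)_j for all j = 1,…,6n, i.e., κ = κ(a,λ). -/

import Mathlib

open Finset

namespace Phos

noncomputable section

/-- Standard basis vector of `ℝ^N`, with `1`-based index `j`. -/
def e (N : ℕ) (j : ℕ) : Fin N → ℝ := fun m => if (m : ℕ) + 1 = j then 1 else 0

/-- Standard basis vector of `ℕ^N`, with `1`-based index `j`. -/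
def eN (N : ℕ) (j : ℕ) : Fin N → ℕ := fun m => if (m : ℕ) + 1 = j then 1 else 0

/-- The stoichiometric matrix `S` of the `n`-site sequential distributive
phosphorylation network.  For each `i = 1,…,n` the six columns `6(i−1)+1,…,6(i−1)+6`
are `e_{1+3i}−e_1−e_{3i−1}`, `e_1+e_{3i−1}−e_{1+3i}`, `e_1+e_{2+3i}−e_{1+3i}`,
`e_{3+3i}−e_3−e_{2+3i}`, `e_3+e_{2+3i}−e_{3+3i}`, `e_3+e_{3i−1}−e_{3+3i}`. -/
def Smat (n : ℕ) : Matrix (Fin (3*n+3)) (Fin (6*n)) ℝ :=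
  Matrix.of fun m r =>
    (![e (3*n+3) (1+3*((r : ℕ)/6+1)) - e (3*n+3) 1 - e (3*n+3) (3*((r : ℕ)/6+1)-1),
       e (3*n+3) 1 + e (3*n+3) (3*((r : ℕ)/6+1)-1) - e (3*n+3) (1+3*((r : ℕ)/6+1)),
       e (3*n+3) 1 + e (3*n+3) (2+3*((r : ℕ)/6+1)) - e (3*n+3) (1+3*((r : ℕ)/6+1)),
       e (3*n+3) (3+3*((r : ℕ)/6+1)) - e (3*n+3) 3 - e (3*n+3) (2+3*((r : ℕ)/6+1)),
       e (3*n+3) 3 + e (3*n+3) (2+3*((r : ℕ)/6+1)) - e (3*n+3) (3+3*((r : ℕ)/6+1)),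
       e (3*n+3) 3 + e (3*n+3) (3*((r : ℕ)/6+1)-1) - e (3*n+3) (3+3*((r : ℕ)/6+1))])
      ⟨(r : ℕ) % 6, Nat.mod_lt _ (by norm_num)⟩ m

/-- The rate exponent matrix `Y`: for each `i = 1,…,n` the six columns
`6(i−1)+1,…,6(i−1)+6` are `e_1+e_{3i−1}`, `e_{1+3i}`, `e_{1+3i}`,
`e_3+e_{2+3i}`, `e_{3+3i}`, `e_{3+3i}`. -/
def Ymat (n : ℕ) : Matrix (Fin (3*n+3)) (Fin (6*n)) ℕ :=
  Matrix.of fun m r =>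
    (![eN (3*n+3) 1 + eN (3*n+3) (3*((r : ℕ)/6+1)-1),
       eN (3*n+3) (1+3*((r : ℕ)/6+1)),
       eN (3*n+3) (1+3*((r : ℕ)/6+1)),
       eN (3*n+3) 3 + eN (3*n+3) (2+3*((r : ℕ)/6+1)),
       eN (3*n+3) (3+3*((r : ℕ)/6+1)),
       eN (3*n+3) (3+3*((r : ℕ)/6+1))])
      ⟨(r : ℕ) % 6, Nat.mod_lt _ (by norm_num)⟩ m

/-- The monomial map `Φ(x)_j = ∏ₘ xₘ^{Y_{mj}}`. -/
def Phi (n : ℕ) (x : Fin (3*n+3) → ℝ) : Fin (6*n) → ℝ :=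
  fun r => ∏ m, x m ^ (Ymat n m r)

/-- The conservation matrix `Z` (rows `z1, z2, z3`). -/
def Zmat (n : ℕ) : Matrix (Fin 3) (Fin (3*n+3)) ℝ :=
  Matrix.of fun r j =>
    if (r : ℕ) = 0 then (if (j : ℕ) % 3 = 0 then 1 else 0)
    else if (r : ℕ) = 1 then
      (if (j : ℕ) % 3 = 1 then 1 else if (j : ℕ) = 0 ∨ (j : ℕ) = 2 then -1 else 0)
    else (if (j : ℕ) % 3 = 2 then 1 else 0)

/-- The `6 × 3` block `E0`. -/
def E0 : Fin 6 → Fin 3 → ℝ :=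
  ![![1,0,1], ![1,0,0], ![0,0,1], ![0,1,1], ![0,1,0], ![0,0,1]]

/-- The block diagonal matrix `E` with `n` copies of `E0`. -/
def Emat (n : ℕ) : Matrix (Fin (6*n)) (Fin (3*n)) ℝ :=
  Matrix.of fun r c =>
    if (r : ℕ) / 6 = (c : ℕ) / 3 then
      E0 ⟨(r : ℕ) % 6, Nat.mod_lt _ (by norm_num)⟩ ⟨(c : ℕ) % 3, Nat.mod_lt _ (by norm_num)⟩
    else 0

/-- The matrix `L ∈ ℤ^{(3+3n)×3}`: row `1 = (1, n−1, −1)`, row `2 = (−1, −n, 0)`,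
row `3 = (1, n−2, −1)`, and for `i = 1,…,n` rows `1+3i` and `3+3i` equal
`(0, i−2, −1)` while row `2+3i = (−1, i−n, 0)`. -/
def Lmat (n : ℕ) : Matrix (Fin (3*n+3)) (Fin 3) ℤ :=
  Matrix.of fun j c =>
    if (j : ℕ) = 0 then ![1, (n : ℤ) - 1, -1] c
    else if (j : ℕ) = 1 then ![-1, -(n : ℤ), 0] c
    else if (j : ℕ) = 2 then ![1, (n : ℤ) - 2, -1] c
    else if (j : ℕ) % 3 = 1 then ![-1, (((j : ℕ) / 3 : ℕ) : ℤ) - (n : ℤ), 0] c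
    else ![0, (((j : ℕ) / 3 : ℕ) : ℤ) - 2, -1] c

/-- `g^L ∈ ℝ_{>0}^{3+3n}`, `(g^L)_j = g₁^{L_{j1}} g₂^{L_{j2}} g₃^{L_{j3}}`. -/
def gL (n : ℕ) (g : Fin 3 → ℝ) : Fin (3*n+3) → ℝ :=
  fun j => ∏ c, g c ^ (Lmat n j c)

/-- The coset condition map `Θ(g,a) = Z diag(a) (g^L − 𝟙)`. -/
def Theta (n : ℕ) (g : Fin 3 → ℝ) (a : Fin (3*n+3) → ℝ) : Fin 3 → ℝ :=
  (Zmat n).mulVec (fun j => a j * (gL n g j - 1))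

/-- The rate constants `κ(a,λ)_j = (Eλ)_j / Φ(a)_j`. -/
def kappaOf (n : ℕ) (a : Fin (3*n+3) → ℝ) (lam : Fin (3*n) → ℝ) : Fin (6*n) → ℝ :=
  fun r => (Emat n).mulVec lam r / Phi n a r

/-- `x` is a (positive) steady state of `ẋ = S diag(κ) Φ(x)`. -/
def isSteady (n : ℕ) (κ : Fin (6*n) → ℝ) (x : Fin (3*n+3) → ℝ) : Prop :=
  (Smat n).mulVec (fun r => κ r * Phi n x r) = 0

/-- The `1`-based component `a_j` of a vector `a ∈ ℝ^{3+3n}`. -/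
def av (n : ℕ) (a : Fin (3*n+3) → ℝ) (j : ℕ) : ℝ :=
  if h : j - 1 < 3*n+3 then a ⟨j - 1, h⟩ else 0

/-- `ω1 = Σ_{k=0}^n a_{1+3k}`. -/
def om1 (n : ℕ) (a : Fin (3*n+3) → ℝ) : ℝ := ∑ k ∈ Finset.range (n+1), av n a (1+3*k)

/-- `ω2 = −a₁ − a₃ + Σ_{k=0}^n a_{2+3k}`. -/
def om2 (n : ℕ) (a : Fin (3*n+3) → ℝ) : ℝ :=
  -(av n a 1) - av n a 3 + ∑ k ∈ Finset.range (n+1), av n a (2+3*k)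

/-- `ω3 = Σ_{k=0}^n a_{3+3k}`. -/
def om3 (n : ℕ) (a : Fin (3*n+3) → ℝ) : ℝ := ∑ k ∈ Finset.range (n+1), av n a (3+3*k)

/-- `Ω2(ξ) = Σ_{k=0}^n a_{2+3k} ξ^k`. -/
def Om2 (n : ℕ) (a : Fin (3*n+3) → ℝ) (ξ : ℝ) : ℝ :=
  ∑ k ∈ Finset.range (n+1), av n a (2+3*k) * ξ ^ k

/-- `Ω4(ξ) = Σ_{k=1}^n a_{1+3k} ξ^{k−1}`. -/
def Om4 (n : ℕ) (a : Fin (3*n+3) → ℝ) (ξ : ℝ) : ℝ :=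
  ∑ k ∈ Finset.Icc 1 n, av n a (1+3*k) * ξ ^ (k-1)

/-- `Ω6(ξ) = Σ_{k=1}^n a_{3+3k} ξ^{k−1}`. -/
def Om6 (n : ℕ) (a : Fin (3*n+3) → ℝ) (ξ : ℝ) : ℝ :=
  ∑ k ∈ Finset.Icc 1 n, av n a (3+3*k) * ξ ^ (k-1)

/-- `Δ(ξ) = (a₁/ω1)ξ − a₃/ω3`. -/
def Dlt (n : ℕ) (a : Fin (3*n+3) → ℝ) (ξ : ℝ) : ℝ :=
  av n a 1 / om1 n a * ξ - av n a 3 / om3 n a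

/-- `ξ* = (ω1 a₃)/(a₁ ω3)`. -/
def xistar (n : ℕ) (a : Fin (3*n+3) → ℝ) : ℝ :=
  om1 n a * av n a 3 / (av n a 1 * om3 n a)

/-- `F1(ξ) = Ω6(ξ)/ω3 − Ω4(ξ)/ω1`. -/
def F1 (n : ℕ) (a : Fin (3*n+3) → ℝ) (ξ : ℝ) : ℝ :=
  Om6 n a ξ / om3 n a - Om4 n a ξ / om1 n a

/-- `F3(ξ) = (a₁ξ/ω1)(Ω6(ξ)/ω3) − (a₃/ω3)(Ω4(ξ)/ω1)`. -/
def F3 (n : ℕ) (a : Fin (3*n+3) → ℝ) (ξ : ℝ) : ℝ :=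
  av n a 1 * ξ / om1 n a * (Om6 n a ξ / om3 n a) - av n a 3 / om3 n a * (Om4 n a ξ / om1 n a)

/-- `A(ξ) = (Ω4(ξ)+Ω6(ξ))Ω2(ξ)`. -/
def Ap (n : ℕ) (a : Fin (3*n+3) → ℝ) (ξ : ℝ) : ℝ := (Om4 n a ξ + Om6 n a ξ) * Om2 n a ξ

/-- `B(ξ) = (a₁ξ + a₃)Ω2(ξ) − ω2 ξ (Ω4(ξ)+Ω6(ξ))`. -/
def Bp (n : ℕ) (a : Fin (3*n+3) → ℝ) (ξ : ℝ) : ℝ :=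
  (av n a 1 * ξ + av n a 3) * Om2 n a ξ - om2 n a * ξ * (Om4 n a ξ + Om6 n a ξ)

/-- `C(ξ) = ξ(a₁ξ + a₃)(ω1+ω2+ω3)`. -/
def Cp (n : ℕ) (a : Fin (3*n+3) → ℝ) (ξ : ℝ) : ℝ :=
  ξ * (av n a 1 * ξ + av n a 3) * (om1 n a + om2 n a + om3 n a)

/-- `P(ξ) = A(ξ)Δ(ξ)² + B(ξ)Δ(ξ)F1(ξ) − C(ξ)F1(ξ)²`. -/
def Pp (n : ℕ) (a : Fin (3*n+3) → ℝ) (ξ : ℝ) : ℝ :=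
  Ap n a ξ * (Dlt n a ξ)^2 + Bp n a ξ * Dlt n a ξ * F1 n a ξ - Cp n a ξ * (F1 n a ξ)^2

/-- `θ(ξ) = 2C(ξ)F1(ξ) − Δ(ξ)[B(ξ) + (B(ξ)² + 4A(ξ)C(ξ))^{1/2}]`. -/
def thetaFun (n : ℕ) (a : Fin (3*n+3) → ℝ) (ξ : ℝ) : ℝ :=
  2 * Cp n a ξ * F1 n a ξ -
    Dlt n a ξ * (Bp n a ξ + Real.sqrt ((Bp n a ξ)^2 + 4 * Ap n a ξ * Cp n a ξ))

/-- `g1(ξ) = ξ^{1−n} F1(ξ)/Δ(ξ)`. -/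
def g1f (n : ℕ) (a : Fin (3*n+3) → ℝ) (ξ : ℝ) : ℝ :=
  ξ ^ ((1 : ℤ) - (n : ℤ)) * F1 n a ξ / Dlt n a ξ

/-- `g3(ξ) = ξ^{−1} F3(ξ)/Δ(ξ)`. -/
def g3f (n : ℕ) (a : Fin (3*n+3) → ℝ) (ξ : ℝ) : ℝ :=
  ξ⁻¹ * F3 n a ξ / Dlt n a ξ

/-- The candidate second steady state `b = diag(g^L) a` built from a zero `ξ`
of the determining equation, with `g = (g1(ξ), ξ, g3(ξ))`. -/
def bOf (n : ℕ) (a : Fin (3*n+3) → ℝ) (ξ : ℝ) : Fin (3*n+3) → ℝ :=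
  fun j => gL n ![g1f n a ξ, ξ, g3f n a ξ] j * a j

end

end Phos
namespace Phos

/-- Evaluate a `Fin N`-vector at a natural index, `0` out of range. -/
noncomputable def dvec {N : ℕ} (f : Fin N → ℝ) (r : ℕ) : ℝ :=
  if h : r < N then f ⟨r, h⟩ else 0

lemma dvec_pos {N : ℕ} (f : Fin N → ℝ) (r : ℕ) (h : r < N) :
    dvec f r = f ⟨r, h⟩ := dif_pos h

lemma e_mk (N j a : ℕ) (h : a < N) :
    e N j ⟨a, h⟩ = if a + 1 = j then 1 else 0 := rfl

lemma sum_range_mul (k : ℕ) (F : ℕ → ℝ) (N : ℕ) :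
    ∑ r ∈ Finset.range (k*N), F r
      = ∑ i ∈ Finset.range N, ∑ s ∈ Finset.range k, F (k*i+s) := by
  induction N with
  | zero => simp
  | succ N ih =>
    rw [Finset.sum_range_succ, ← ih, Nat.mul_succ]
    have h2 := Finset.sum_Ico_consecutive F (Nat.zero_le (k*N)) (Nat.le_add_right (k*N) k)
    simp only [← Finset.range_eq_Ico] at h2
    rw [← h2]
    congr 1
    rw [Finset.sum_Ico_eq_sum_range]
    have hk : k*N+k-(k*N) = k := by omega
    rw [hk]

lemma sum_fin_mul {k n : ℕ} (f : Fin (k*n) → ℝ) :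
    ∑ r, f r = ∑ i ∈ Finset.range n, ∑ s ∈ Finset.range k, dvec f (k*i+s) := by
  have h1 : ∑ r, f r = ∑ r ∈ Finset.range (k*n), dvec f r := by
    rw [← Fin.sum_univ_eq_sum_range (fun r => dvec f r) (k*n)]
    exact Finset.sum_congr rfl fun r _ => by simp [dvec, r.isLt]
  rw [h1, sum_range_mul]

end Phos
namespace Phos

lemma Smat_entry0 (n : ℕ) (m : Fin (3*n+3)) (i : ℕ) (pf : 6*i+0 < 6*n) :
    Smat n m ⟨6*i+0, pf⟩
      = e (3*n+3) (1+3*(i+1)) m - e (3*n+3) 1 m - e (3*n+3) (3*(i+1)-1) m := by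
  have h1 : (6*i+0)/6 = i := by omega
  have h2 : (6*i+0)%6 = 0 := by omega
  simp only [Smat, Matrix.of_apply, h1, h2]; rfl

lemma Smat_entry1 (n : ℕ) (m : Fin (3*n+3)) (i : ℕ) (pf : 6*i+1 < 6*n) :
    Smat n m ⟨6*i+1, pf⟩
      = e (3*n+3) 1 m + e (3*n+3) (3*(i+1)-1) m - e (3*n+3) (1+3*(i+1)) m := by
  have h1 : (6*i+1)/6 = i := by omega
  have h2 : (6*i+1)%6 = 1 := by omega
  simp only [Smat, Matrix.of_apply, h1, h2]; rfl

lemma Smat_entry2 (n : ℕ) (m : Fin (3*n+3)) (i : ℕ) (pf : 6*i+2 < 6*n) :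
    Smat n m ⟨6*i+2, pf⟩
      = e (3*n+3) 1 m + e (3*n+3) (2+3*(i+1)) m - e (3*n+3) (1+3*(i+1)) m := by
  have h1 : (6*i+2)/6 = i := by omega
  have h2 : (6*i+2)%6 = 2 := by omega
  simp only [Smat, Matrix.of_apply, h1, h2]; rfl

lemma Smat_entry3 (n : ℕ) (m : Fin (3*n+3)) (i : ℕ) (pf : 6*i+3 < 6*n) :
    Smat n m ⟨6*i+3, pf⟩
      = e (3*n+3) (3+3*(i+1)) m - e (3*n+3) 3 m - e (3*n+3) (2+3*(i+1)) m := by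
  have h1 : (6*i+3)/6 = i := by omega
  have h2 : (6*i+3)%6 = 3 := by omega
  simp only [Smat, Matrix.of_apply, h1, h2]; rfl

lemma Smat_entry4 (n : ℕ) (m : Fin (3*n+3)) (i : ℕ) (pf : 6*i+4 < 6*n) :
    Smat n m ⟨6*i+4, pf⟩
      = e (3*n+3) 3 m + e (3*n+3) (2+3*(i+1)) m - e (3*n+3) (3+3*(i+1)) m := by
  have h1 : (6*i+4)/6 = i := by omega
  have h2 : (6*i+4)%6 = 4 := by omega
  simp only [Smat, Matrix.of_apply, h1, h2]; rfl

lemma Smat_entry5 (n : ℕ) (m : Fin (3*n+3)) (i : ℕ) (pf : 6*i+5 < 6*n) :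
    Smat n m ⟨6*i+5, pf⟩
      = e (3*n+3) 3 m + e (3*n+3) (3*(i+1)-1) m - e (3*n+3) (3+3*(i+1)) m := by
  have h1 : (6*i+5)/6 = i := by omega
  have h2 : (6*i+5)%6 = 5 := by omega
  simp only [Smat, Matrix.of_apply, h1, h2]; rfl

lemma dvec_smat (n : ℕ) (m : Fin (3*n+3)) (v : Fin (6*n) → ℝ) (r : ℕ) (h : r < 6*n) :
    dvec (fun x => Smat n m x * v x) r = Smat n m ⟨r,h⟩ * dvec v r := by
  rw [dvec_pos _ r h]
  show Smat n m ⟨r,h⟩ * v ⟨r,h⟩ = _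
  rw [dvec_pos v r h]

lemma mulVec_S (n : ℕ) (v : Fin (6*n) → ℝ) (m : Fin (3*n+3)) :
    (Smat n).mulVec v m = ∑ i ∈ Finset.range n,
      ((e (3*n+3) (1+3*(i+1)) m - e (3*n+3) 1 m - e (3*n+3) (3*(i+1)-1) m) * dvec v (6*i+0)
       + (e (3*n+3) 1 m + e (3*n+3) (3*(i+1)-1) m - e (3*n+3) (1+3*(i+1)) m) * dvec v (6*i+1)
       + (e (3*n+3) 1 m + e (3*n+3) (2+3*(i+1)) m - e (3*n+3) (1+3*(i+1)) m) * dvec v (6*i+2)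
       + (e (3*n+3) (3+3*(i+1)) m - e (3*n+3) 3 m - e (3*n+3) (2+3*(i+1)) m) * dvec v (6*i+3)
       + (e (3*n+3) 3 m + e (3*n+3) (2+3*(i+1)) m - e (3*n+3) (3+3*(i+1)) m) * dvec v (6*i+4)
       + (e (3*n+3) 3 m + e (3*n+3) (3*(i+1)-1) m - e (3*n+3) (3+3*(i+1)) m) * dvec v (6*i+5)) := by
  rw [show (Smat n).mulVec v m = ∑ r, Smat n m r * v r from rfl,
     sum_fin_mul (fun r => Smat n m r * v r)]
  refine Finset.sum_congr rfl fun i hi => ?_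
  have hi' : i < n := Finset.mem_range.1 hi
  simp only [Finset.sum_range_succ, Finset.sum_range_zero, zero_add]
  rw [dvec_smat n m v (6*i+0) (by omega), dvec_smat n m v (6*i+1) (by omega),
      dvec_smat n m v (6*i+2) (by omega), dvec_smat n m v (6*i+3) (by omega),
      dvec_smat n m v (6*i+4) (by omega), dvec_smat n m v (6*i+5) (by omega),
      Smat_entry0 n m i, Smat_entry1 n m i, Smat_entry2 n m i,
      Smat_entry3 n m i, Smat_entry4 n m i, Smat_entry5 n m i]

end Phos
namespace Phos

lemma row1 (n : ℕ) (v : Fin (6*n) → ℝ) (hS : (Smat n).mulVec v = 0)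
    (i : ℕ) (hi : i < n) :
    dvec v (6*i+0) = dvec v (6*i+1) + dvec v (6*i+2) := by
  have h0 : (Smat n).mulVec v ⟨3*i+3, by omega⟩ = 0 := by rw [hS]; rfl
  rw [mulVec_S, Finset.sum_eq_single_of_mem i (Finset.mem_range.2 hi) ?side] at h0
  · simp only [e_mk] at h0
    split_ifs at h0 <;> first | omega | linarith
  case side =>
    intro i' _ hne
    simp only [e_mk]
    split_ifs <;> first | omega | ring

lemma row2 (n : ℕ) (v : Fin (6*n) → ℝ) (hS : (Smat n).mulVec v = 0)
    (i : ℕ) (hi : i < n) :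
    dvec v (6*i+3) = dvec v (6*i+4) + dvec v (6*i+5) := by
  have h0 : (Smat n).mulVec v ⟨3*i+5, by omega⟩ = 0 := by rw [hS]; rfl
  rw [mulVec_S, Finset.sum_eq_single_of_mem i (Finset.mem_range.2 hi) ?side] at h0
  · simp only [e_mk] at h0
    split_ifs at h0 <;> first | omega | linarith
  case side =>
    intro i' _ hne
    simp only [e_mk]
    split_ifs <;> first | omega | ring

lemma row3zero (n : ℕ) (v : Fin (6*n) → ℝ) (hS : (Smat n).mulVec v = 0)
    (hn : 0 < n) :
    dvec v 5 = dvec v 0 - dvec v 1 := by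
  have h0 : (Smat n).mulVec v ⟨1, by omega⟩ = 0 := by rw [hS]; rfl
  rw [mulVec_S, Finset.sum_eq_single_of_mem 0 (Finset.mem_range.2 hn) ?side] at h0
  · simp only [e_mk] at h0
    norm_num at h0
    linarith
  case side =>
    intro i' _ hne
    simp only [e_mk]
    split_ifs <;> first | omega | ring

set_option maxHeartbeats 1600000 in
lemma row3succ (n : ℕ) (v : Fin (6*n) → ℝ) (hS : (Smat n).mulVec v = 0)
    (i : ℕ) (hi : i + 1 < n) :
    dvec v (6*i+2) - dvec v (6*i+3) + dvec v (6*i+4)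
      - dvec v (6*(i+1)+0) + dvec v (6*(i+1)+1) + dvec v (6*(i+1)+5) = 0 := by
  have h0 : (Smat n).mulVec v ⟨3*(i+1)+1, by omega⟩ = 0 := by rw [hS]; rfl
  rw [mulVec_S, Finset.sum_eq_add_of_mem i (i+1)
      (Finset.mem_range.2 (by omega)) (Finset.mem_range.2 hi) (by omega) ?rest] at h0
  · simp only [e_mk] at h0
    split_ifs at h0 <;> first | omega | linarith
  case rest =>
    intro i' _ hne
    obtain ⟨hne1, hne2⟩ := hne
    simp only [e_mk]
    split_ifs <;> first | omega | ring

end Phos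
namespace Phos

lemma dvec_mul {N : ℕ} (A B : Fin N → ℝ) (r : ℕ) (h : r < N) :
    dvec (fun x => A x * B x) r = A ⟨r,h⟩ * dvec B r := by
  rw [dvec_pos _ r h]
  show A ⟨r,h⟩ * B ⟨r,h⟩ = _
  rw [dvec_pos B r h]

lemma Emat_entry (n i s i' p : ℕ) (hs : s < 6) (hp : p < 3)
    (pf : 6*i+s < 6*n) (pf2 : 3*i'+p < 3*n) :
    Emat n ⟨6*i+s, pf⟩ ⟨3*i'+p, pf2⟩
      = if i = i' then E0 ⟨s, hs⟩ ⟨p, hp⟩ else 0 := by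
  have h1 : (6*i+s)/6 = i := by omega
  have h2 : (6*i+s)%6 = s := by omega
  have h3 : (3*i'+p)/3 = i' := by omega
  have h4 : (3*i'+p)%3 = p := by omega
  simp only [Emat, Matrix.of_apply, h1, h2, h3, h4]

lemma Emat_mulVec (n : ℕ) (lam : Fin (3*n) → ℝ) (i s : ℕ)
    (hi : i < n) (hs : s < 6) (pf : 6*i+s < 6*n) :
    (Emat n).mulVec lam ⟨6*i+s, pf⟩
      = E0 ⟨s, hs⟩ 0 * dvec lam (3*i+0) + E0 ⟨s, hs⟩ 1 * dvec lam (3*i+1)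
        + E0 ⟨s, hs⟩ 2 * dvec lam (3*i+2) := by
  rw [show (Emat n).mulVec lam ⟨6*i+s,pf⟩ = ∑ c, Emat n ⟨6*i+s,pf⟩ c * lam c from rfl,
      sum_fin_mul (fun c => Emat n ⟨6*i+s,pf⟩ c * lam c),
      Finset.sum_eq_single_of_mem i (Finset.mem_range.2 hi) ?side]
  · simp only [Finset.sum_range_succ, Finset.sum_range_zero, zero_add]
    rw [dvec_mul _ lam (3*i+0) (by omega), dvec_mul _ lam (3*i+1) (by omega),
        dvec_mul _ lam (3*i+2) (by omega),
        Emat_entry n i s i 0 hs (by omega) pf (by omega),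
        Emat_entry n i s i 1 hs (by omega) pf (by omega),
        Emat_entry n i s i 2 hs (by omega) pf (by omega)]
    rw [if_pos rfl, if_pos rfl, if_pos rfl]
    exact rfl
  case side =>
    intro i' hi' hne
    have hi'' : i' < n := Finset.mem_range.1 hi'
    rw [Finset.sum_eq_zero]
    intro p hp
    have hp' : p < 3 := Finset.mem_range.1 hp
    rw [dvec_mul _ lam (3*i'+p) (by omega : 3*i'+p < 3*n),
        Emat_entry n i s i' p hs hp' pf (by omega), if_neg (by omega), zero_mul]

lemma Phi_pos (n : ℕ) (a : Fin (3*n+3) → ℝ) (ha : ∀ j, 0 < a j) (r : Fin (6*n)) :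
    0 < Phi n a r :=
  Finset.prod_pos fun m _ => pow_pos (ha m) _

end Phos
namespace Phos

lemma SE_zero (n : ℕ) (lam : Fin (3*n) → ℝ) :
    (Smat n).mulVec ((Emat n).mulVec lam) = 0 := by
  funext m
  rw [Pi.zero_apply, mulVec_S]
  apply Finset.sum_eq_zero
  intro i hi
  have hi' : i < n := Finset.mem_range.1 hi
  have d0 : dvec ((Emat n).mulVec lam) (6*i+0)
      = dvec lam (3*i+0) + dvec lam (3*i+2) := by
    rw [dvec_pos _ _ (by omega : 6*i+0 < 6*n),
        Emat_mulVec n lam i 0 hi' (by norm_num) (by omega)]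
    norm_num [E0, Matrix.cons_val_two]
  have d1 : dvec ((Emat n).mulVec lam) (6*i+1) = dvec lam (3*i+0) := by
    rw [dvec_pos _ _ (by omega : 6*i+1 < 6*n),
        Emat_mulVec n lam i 1 hi' (by norm_num) (by omega)]
    norm_num [E0, Matrix.cons_val_two]
  have d2 : dvec ((Emat n).mulVec lam) (6*i+2) = dvec lam (3*i+2) := by
    rw [dvec_pos _ _ (by omega : 6*i+2 < 6*n),
        Emat_mulVec n lam i 2 hi' (by norm_num) (by omega)]
    norm_num [E0, Matrix.cons_val_two]
  have d3 : dvec ((Emat n).mulVec lam) (6*i+3)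
      = dvec lam (3*i+1) + dvec lam (3*i+2) := by
    rw [dvec_pos _ _ (by omega : 6*i+3 < 6*n),
        Emat_mulVec n lam i 3 hi' (by norm_num) (by omega)]
    norm_num [E0, Matrix.cons_val_two]
  have d4 : dvec ((Emat n).mulVec lam) (6*i+4) = dvec lam (3*i+1) := by
    rw [dvec_pos _ _ (by omega : 6*i+4 < 6*n),
        Emat_mulVec n lam i 4 hi' (by norm_num) (by omega)]
    norm_num [E0, Matrix.cons_val_two]
  have d5 : dvec ((Emat n).mulVec lam) (6*i+5) = dvec lam (3*i+2) := by
    rw [dvec_pos _ _ (by omega : 6*i+5 < 6*n),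
        Emat_mulVec n lam i 5 hi' (by norm_num) (by omega)]
    norm_num [E0, Matrix.cons_val_two]
  rw [d0, d1, d2, d3, d4, d5]
  ring

lemma exists_lam (n : ℕ) (v : Fin (6*n) → ℝ) (hv : ∀ r, 0 < v r)
    (hS : (Smat n).mulVec v = 0) :
    ∃ lam : Fin (3*n) → ℝ, (∀ c, 0 < lam c) ∧ ∀ r, (Emat n).mulVec lam r = v r := by
  have keyv : ∀ i, i < n → dvec v (6*i+5) = dvec v (6*i+2) := by
    intro i
    induction i with
    | zero =>
      intro hi
      have h1 := row1 n _ hS 0 hi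
      have h3 := row3zero n _ hS hi
      norm_num at h1 h3 ⊢
      linarith
    | succ i ih =>
      intro hi
      have e2 := row2 n _ hS i (by omega)
      have e3 := row3succ n _ hS i hi
      have e1 := row1 n _ hS (i+1) hi
      have eih := ih (by omega)
      linarith
  refine ⟨fun c => dvec v (6*((c:ℕ)/3) +
      (if (c:ℕ)%3 = 0 then 1 else if (c:ℕ)%3 = 1 then 4 else 2)), fun c => ?_, fun r => ?_⟩
  · have hb : (if (c:ℕ)%3 = 0 then 1 else if (c:ℕ)%3 = 1 then 4 else 2) ≤ 4 := by
      split_ifs <;> omega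
    have hc : (c:ℕ) < 3*n := c.isLt
    show 0 < dvec v (6*((c:ℕ)/3) +
      (if (c:ℕ)%3 = 0 then 1 else if (c:ℕ)%3 = 1 then 4 else 2))
    rw [dvec_pos _ _ (by omega)]
    exact hv _
  · obtain ⟨i, s, hi, hs, hval⟩ : ∃ i s, i < n ∧ s < 6 ∧ (r:ℕ) = 6*i+s :=
      ⟨(r:ℕ)/6, (r:ℕ)%6, by omega, by omega, by omega⟩
    have hre : r = ⟨6*i+s, by omega⟩ := Fin.ext hval
    rw [hre, Emat_mulVec n _ i s hi hs (by omega)]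
    have l0 : dvec (fun c : Fin (3*n) => dvec v (6*((c:ℕ)/3) +
        (if (c:ℕ)%3 = 0 then 1 else if (c:ℕ)%3 = 1 then 4 else 2))) (3*i+0)
        = dvec v (6*i+1) := by
      rw [dvec_pos _ _ (by omega : 3*i+0 < 3*n)]
      show dvec v (6*((3*i+0)/3) +
        (if (3*i+0)%3 = 0 then 1 else if (3*i+0)%3 = 1 then 4 else 2)) = _
      rw [show (3*i+0)/3 = i from by omega]
      norm_num
    have l1 : dvec (fun c : Fin (3*n) => dvec v (6*((c:ℕ)/3) +
        (if (c:ℕ)%3 = 0 then 1 else if (c:ℕ)%3 = 1 then 4 else 2))) (3*i+1)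
        = dvec v (6*i+4) := by
      rw [dvec_pos _ _ (by omega : 3*i+1 < 3*n)]
      show dvec v (6*((3*i+1)/3) +
        (if (3*i+1)%3 = 0 then 1 else if (3*i+1)%3 = 1 then 4 else 2)) = _
      rw [show (3*i+1)/3 = i from by omega, show (3*i+1)%3 = 1 from by omega]
      norm_num
    have l2 : dvec (fun c : Fin (3*n) => dvec v (6*((c:ℕ)/3) +
        (if (c:ℕ)%3 = 0 then 1 else if (c:ℕ)%3 = 1 then 4 else 2))) (3*i+2)
        = dvec v (6*i+2) := by
      rw [dvec_pos _ _ (by omega : 3*i+2 < 3*n)]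
      show dvec v (6*((3*i+2)/3) +
        (if (3*i+2)%3 = 0 then 1 else if (3*i+2)%3 = 1 then 4 else 2)) = _
      rw [show (3*i+2)/3 = i from by omega, show (3*i+2)%3 = 2 from by omega]
      norm_num
    rw [l0, l1, l2, ← dvec_pos v (6*i+s) (by omega)]
    interval_cases s
    · have h1 := row1 n v hS i hi
      norm_num [E0, Matrix.cons_val_two] at h1 ⊢
      linarith
    · norm_num [E0, Matrix.cons_val_two]
    · norm_num [E0, Matrix.cons_val_two]
    · have h2 := row2 n v hS i hi
      have hk := keyv i hi
      norm_num [E0, Matrix.cons_val_two] at h2 hk ⊢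
      linarith
    · norm_num [E0, Matrix.cons_val_two]
    · have hk := keyv i hi
      norm_num [E0, Matrix.cons_val_two] at hk ⊢
      linarith

theorem steady_state_iff_kappa_param' (n : ℕ) (hn : 2 ≤ n)
    (κ : Fin (6*n) → ℝ) (hκ : ∀ r, 0 < κ r)
    (a : Fin (3*n+3) → ℝ) (ha : ∀ j, 0 < a j) :
    isSteady n κ a ↔
      ∃ lam : Fin (3*n) → ℝ, (∀ c, 0 < lam c) ∧ κ = kappaOf n a lam := by
  constructor
  · intro h
    have hS : (Smat n).mulVec (fun r => κ r * Phi n a r) = 0 := h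
    obtain ⟨lam, hpos, hEv⟩ := exists_lam n (fun r => κ r * Phi n a r)
      (fun r => mul_pos (hκ r) (Phi_pos n a ha r)) hS
    refine ⟨lam, hpos, ?_⟩
    funext r
    have hPhi : Phi n a r ≠ 0 := (Phi_pos n a ha r).ne'
    rw [show kappaOf n a lam r = (Emat n).mulVec lam r / Phi n a r from rfl, hEv r]
    exact (mul_div_cancel_right₀ _ hPhi).symm
  · rintro ⟨lam, hpos, rfl⟩
    show (Smat n).mulVec (fun r => kappaOf n a lam r * Phi n a r) = 0
    have : (fun r => kappaOf n a lam r * Phi n a r) = (Emat n).mulVec lam := by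
      funext r
      exact div_mul_cancel₀ _ (Phi_pos n a ha r).ne'
    rw [this]
    exact SE_zero n lam

end Phos
namespace Phos

/-- `a ∈ ℝ_{>0}^{3+3n}` is a positive steady state of
`ẋ = S diag(κ) Φ(x)` iff `κ = κ(a,λ)` for some `λ ∈ ℝ_{>0}^{3n}`. -/
theorem steady_state_iff_kappa_param (n : ℕ) (hn : 2 ≤ n)
    (κ : Fin (6*n) → ℝ) (hκ : ∀ r, 0 < κ r)
    (a : Fin (3*n+3) → ℝ) (ha : ∀ j, 0 < a j) :
    isSteady n κ a ↔
      ∃ lam : Fin (3*n) → ℝ, (∀ c, 0 < lam c) ∧ κ = kappaOf n a lam := by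
  exact steady_state_iff_kappa_param' n hn κ hκ a ha

end Phos
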